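/- Let E be a real Banach space and let (S(t))_{t≥0} be a compact C₀-semigroup on E. Define, for a Bochner integrable function y : [0,1] → E, K₀(y)(t) := ∫₀ᵗ S(t−s) y(s) ds for t ∈ [0,1]. Then each K₀(y) is a continuous function [0,1] → E, and for every integrably bounded set 𝔄 of Bochner integrable functions [0,1] → E (i.e., there exists an integrable λ : [0,1] → ℝ with ‖y(t)‖ ≤ λ(t) for a.e. t ∈ [0,1] and all y ∈ 𝔄), the image {K₀(y) : y ∈ 𝔄} is relatively compact in the space C([0,1],E) of continuous functions with the supremum metric. -/

import Mathlib

open MeasureTheory Set Topology Filter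

set_option linter.unusedSectionVars false

section Aux
variable {E : Type*} [NormedAddCommGroup E] [NormedSpace ℝ E] [CompleteSpace E]
variable (S : ℝ → E →L[ℝ] E)

lemma aux_opNorm_bound (hScont : ∀ x : E, ContinuousOn (fun t => S t x) (Set.Ici (0:ℝ)))
    (b : ℝ) : ∃ M : ℝ, 1 ≤ M ∧ ∀ h ∈ Icc (0:ℝ) b, ‖S h‖ ≤ M := by
  have h1 : ∀ x : E, ∃ C : ℝ, ∀ i : Icc (0:ℝ) b, ‖S i x‖ ≤ C := by
    intro x
    obtain ⟨C, hC⟩ := (isCompact_Icc (a := (0:ℝ)) (b := b)).exists_bound_of_continuousOn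
      ((hScont x).mono (Icc_subset_Ici_self))
    exact ⟨C, fun i => hC i i.2⟩
  obtain ⟨C', hC'⟩ := banach_steinhaus (g := fun i : Icc (0:ℝ) b => S i) h1
  exact ⟨max C' 1, le_max_right _ _, fun h hh => le_max_of_le_left (hC' ⟨h, hh⟩)⟩

lemma aux_T_cont (hScont : ∀ x : E, ContinuousOn (fun t => S t x) (Set.Ici (0:ℝ)))
    (x : E) : Continuous fun h : ℝ => S (max h 0) x :=
  (hScont x).comp_continuous (continuous_id.max continuous_const)
    (fun _ => Set.mem_Ici.mpr (le_max_right _ _))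

lemma aux_T_joint_cont (hScont : ∀ x : E, ContinuousOn (fun t => S t x) (Set.Ici (0:ℝ))) :
    Continuous fun p : ℝ × E => S (max p.1 0) p.2 := by
  rw [continuous_iff_continuousAt]
  rintro ⟨h₀, x₀⟩
  obtain ⟨M, hM1, hM⟩ := aux_opNorm_bound S hScont (|h₀| + 1)
  rw [ContinuousAt, tendsto_iff_norm_sub_tendsto_zero]
  have hev : ∀ᶠ p : ℝ × E in 𝓝 (h₀, x₀),
      ‖S (max p.1 0) p.2 - S (max h₀ 0) x₀‖ ≤
        M * ‖p.2 - x₀‖ + ‖S (max p.1 0) x₀ - S (max h₀ 0) x₀‖ := by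
    have : ∀ᶠ p : ℝ × E in 𝓝 (h₀, x₀), p.1 < |h₀| + 1 :=
      (isOpen_lt continuous_fst continuous_const).mem_nhds
        (show (h₀, x₀).1 < |h₀| + 1 from lt_of_le_of_lt (le_abs_self _) (lt_add_one _))
    filter_upwards [this] with p hp
    have hmem : max p.1 0 ∈ Icc (0:ℝ) (|h₀| + 1) :=
      ⟨le_max_right _ _, max_le hp.le (by positivity)⟩
    calc ‖S (max p.1 0) p.2 - S (max h₀ 0) x₀‖
        ≤ ‖S (max p.1 0) p.2 - S (max p.1 0) x₀‖ + ‖S (max p.1 0) x₀ - S (max h₀ 0) x₀‖ :=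
          norm_sub_le_norm_sub_add_norm_sub _ _ _
      _ ≤ M * ‖p.2 - x₀‖ + ‖S (max p.1 0) x₀ - S (max h₀ 0) x₀‖ := by
          gcongr
          rw [← map_sub]
          exact ((S (max p.1 0)).le_opNorm _).trans (by gcongr; exact hM _ hmem)
  have hlim : Filter.Tendsto
      (fun p : ℝ × E => M * ‖p.2 - x₀‖ + ‖S (max p.1 0) x₀ - S (max h₀ 0) x₀‖)
      (𝓝 (h₀, x₀)) (𝓝 0) := by
    have l1 : Filter.Tendsto (fun p : ℝ × E => M * ‖p.2 - x₀‖) (𝓝 (h₀, x₀)) (𝓝 0) := by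
      have : Continuous fun p : ℝ × E => M * ‖p.2 - x₀‖ := by fun_prop
      simpa [ContinuousAt, sub_self] using this.continuousAt (x := (h₀, x₀))
    have l2 : Filter.Tendsto (fun p : ℝ × E => ‖S (max p.1 0) x₀ - S (max h₀ 0) x₀‖)
        (𝓝 (h₀, x₀)) (𝓝 0) := by
      have : Continuous fun p : ℝ × E => ‖S (max p.1 0) x₀ - S (max h₀ 0) x₀‖ :=
        (((aux_T_cont S hScont x₀).comp continuous_fst).sub continuous_const).norm
      simpa [ContinuousAt, sub_self] using this.continuousAt (x := (h₀, x₀))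
    simpa using l1.add l2
  exact squeeze_zero' (Filter.Eventually.of_forall fun p => norm_nonneg _) hev hlim


lemma aux_aesm (hScont : ∀ x : E, ContinuousOn (fun t => S t x) (Set.Ici (0:ℝ)))
    {y : ℝ → E} (hy : AEStronglyMeasurable y (volume.restrict (Icc (0:ℝ) 1))) (t : ℝ) :
    AEStronglyMeasurable (fun s => S (max (t - s) 0) (y s)) (volume.restrict (Icc (0:ℝ) 1)) :=
  (aux_T_joint_cont S hScont).comp_aestronglyMeasurable
    (((continuous_const.sub continuous_id).aestronglyMeasurable).prodMk hy)

lemma aux_intOn (hScont : ∀ x : E, ContinuousOn (fun t => S t x) (Set.Ici (0:ℝ)))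
    {y : ℝ → E} (hy : IntegrableOn y (Icc (0:ℝ) 1))
    {M : ℝ} (hM : ∀ h ∈ Icc (0:ℝ) 1, ‖S h‖ ≤ M)
    {t : ℝ} (ht : t ≤ 1) :
    IntegrableOn (fun s => S (max (t - s) 0) (y s)) (Icc (0:ℝ) 1) := by
  refine Integrable.mono' (hy.norm.const_mul M) (aux_aesm S hScont hy.aestronglyMeasurable t) ?_
  filter_upwards [ae_restrict_mem measurableSet_Icc] with s hs
  have hmem : max (t - s) 0 ∈ Icc (0:ℝ) 1 :=
    ⟨le_max_right _ _, max_le (by linarith [hs.1, hs.2]) zero_le_one⟩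
  exact ((S _).le_opNorm _).trans (by gcongr; exact hM _ hmem)

lemma aux_ii (hScont : ∀ x : E, ContinuousOn (fun t => S t x) (Set.Ici (0:ℝ)))
    {y : ℝ → E} (hy : IntegrableOn y (Icc (0:ℝ) 1))
    {M : ℝ} (hM : ∀ h ∈ Icc (0:ℝ) 1, ‖S h‖ ≤ M)
    {t a b : ℝ} (ht : t ≤ 1) (ha : 0 ≤ a) (hab : a ≤ b) (hb : b ≤ 1) :
    IntervalIntegrable (fun s => S (max (t - s) 0) (y s)) volume a b := by
  refine IntegrableOn.intervalIntegrable ?_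
  refine (aux_intOn S hScont hy hM ht).mono_set ?_
  rw [uIcc_of_le hab]
  exact Icc_subset_Icc ha hb

lemma aux_K_eq (K₀ : (ℝ → E) → ℝ → E)
    (hK₀ : ∀ y : ℝ → E, ∀ t : ℝ, K₀ y t = ∫ s in (0:ℝ)..t, S (t - s) (y s))
    (y : ℝ → E) {t : ℝ} (ht : 0 ≤ t) :
    K₀ y t = ∫ s in (0:ℝ)..t, S (max (t - s) 0) (y s) := by
  rw [hK₀]
  refine intervalIntegral.integral_congr fun s hs => ?_
  rw [uIcc_of_le ht] at hs
  rw [max_eq_left (by linarith [hs.2])]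

lemma aux_identity (hS0 : S 0 = ContinuousLinearMap.id ℝ E)
    (hSadd : ∀ s t : ℝ, 0 ≤ s → 0 ≤ t → S (t + s) = (S t).comp (S s))
    (hScont : ∀ x : E, ContinuousOn (fun t => S t x) (Set.Ici (0:ℝ)))
    (K₀ : (ℝ → E) → ℝ → E)
    (hK₀ : ∀ y : ℝ → E, ∀ t : ℝ, K₀ y t = ∫ s in (0:ℝ)..t, S (t - s) (y s))
    {M : ℝ} (hM : ∀ h ∈ Icc (0:ℝ) 1, ‖S h‖ ≤ M)
    {y : ℝ → E} (hy : IntegrableOn y (Icc (0:ℝ) 1))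
    {t t' : ℝ} (h0 : 0 ≤ t) (htt' : t ≤ t') (h1 : t' ≤ 1) :
    K₀ y t' = S (t' - t) (K₀ y t) + ∫ s in t..t', S (max (t' - s) 0) (y s) := by
  have ht1 : t ≤ 1 := htt'.trans h1
  rw [aux_K_eq S K₀ hK₀ y (h0.trans htt'), aux_K_eq S K₀ hK₀ y h0]
  have i1 : IntervalIntegrable (fun s => S (max (t' - s) 0) (y s)) volume 0 t :=
    aux_ii S hScont hy hM h1 le_rfl h0 ht1
  have i2 : IntervalIntegrable (fun s => S (max (t' - s) 0) (y s)) volume t t' :=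
    aux_ii S hScont hy hM h1 h0 htt' h1
  rw [← intervalIntegral.integral_add_adjacent_intervals i1 i2]
  congr 1
  have i3 : IntervalIntegrable (fun s => S (max (t - s) 0) (y s)) volume 0 t :=
    aux_ii S hScont hy hM ht1 le_rfl h0 ht1
  rw [← (S (t' - t)).intervalIntegral_comp_comm i3]
  refine intervalIntegral.integral_congr fun s hs => ?_
  rw [uIcc_of_le h0] at hs
  have h2 : (0:ℝ) ≤ t - s := by linarith [hs.2]
  have h3 : (0:ℝ) ≤ t' - s := by linarith [hs.2]
  rw [max_eq_left h2, max_eq_left h3]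
  have := hSadd (t - s) (t' - t) h2 (by linarith)
  rw [show t' - t + (t - s) = t' - s by ring] at this
  rw [this]
  rfl


lemma aux_continuousOn (hScont : ∀ x : E, ContinuousOn (fun t => S t x) (Set.Ici (0:ℝ)))
    (K₀ : (ℝ → E) → ℝ → E)
    (hK₀ : ∀ y : ℝ → E, ∀ t : ℝ, K₀ y t = ∫ s in (0:ℝ)..t, S (t - s) (y s))
    {M : ℝ} (hM : ∀ h ∈ Icc (0:ℝ) 1, ‖S h‖ ≤ M)
    {y : ℝ → E} (hy : IntegrableOn y (Icc (0:ℝ) 1)) :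
    ContinuousOn (K₀ y) (Icc (0:ℝ) 1) := by
  set μ := volume.restrict (Icc (0:ℝ) 1) with hμ
  set F : ℝ → ℝ → E := fun t s => (Ioc 0 t).indicator (fun s => S (max (t - s) 0) (y s)) s
    with hF
  have hrep : ∀ t ∈ Icc (0:ℝ) 1, K₀ y t = ∫ s, F t s ∂μ := by
    intro t ht
    rw [aux_K_eq S K₀ hK₀ y ht.1, hF]
    rw [integral_indicator measurableSet_Ioc, hμ, Measure.restrict_restrict measurableSet_Ioc,
      inter_eq_left.mpr (Ioc_subset_Icc_self.trans (Icc_subset_Icc le_rfl ht.2)),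
      intervalIntegral.integral_of_le ht.1]
  intro t₀ ht₀
  refine (continuousWithinAt_of_dominated (bound := fun s => M * ‖y s‖) ?_ ?_
    (hy.norm.const_mul M) ?_).congr (fun t ht => (hrep t ht)) (hrep t₀ ht₀)
  · exact Eventually.of_forall fun t =>
      (aux_aesm S hScont hy.aestronglyMeasurable t).indicator measurableSet_Ioc
  · filter_upwards [eventually_mem_nhdsWithin] with t ht
    filter_upwards [ae_restrict_mem measurableSet_Icc] with s hs
    refine (norm_indicator_le_norm_self _ _).trans ?_
    have hmem : max (t - s) 0 ∈ Icc (0:ℝ) 1 :=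
      ⟨le_max_right _ _, max_le (by linarith [hs.1, ht.2]) zero_le_one⟩
    exact ((S _).le_opNorm _).trans (by gcongr; exact hM _ hmem)
  · have hnull : ∀ᵐ s ∂μ, s ∉ ({0, t₀} : Set ℝ) :=
      ae_restrict_of_ae (measure_eq_zero_iff_ae_notMem.mp ((Set.toFinite _).measure_zero volume))
    filter_upwards [hnull, ae_restrict_mem measurableSet_Icc] with s hs hsIcc
    have hs0 : s ≠ 0 := fun h => hs (by simp [h])
    have hst : s ≠ t₀ := fun h => hs (by simp [h])
    have hspos : 0 < s := lt_of_le_of_ne hsIcc.1 (Ne.symm hs0)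
    rcases lt_or_gt_of_ne hst with hlt | hgt
    · -- s < t₀ : near t₀, F t s = S (max (t-s) 0) (y s)
      have hopen : {t : ℝ | s < t} ∈ 𝓝 t₀ :=
        (isOpen_lt continuous_const continuous_id).mem_nhds hlt
      have heq : (fun t => F t s) =ᶠ[𝓝 t₀] fun t => S (max (t - s) 0) (y s) := by
        filter_upwards [hopen] with t ht
        exact indicator_of_mem (mem_Ioc.mpr ⟨hspos, ht.le⟩) _
      have hc : ContinuousAt (fun t => S (max (t - s) 0) (y s)) t₀ :=
        ((aux_T_cont S hScont (y s)).comp (continuous_id.sub continuous_const)).continuousAt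
      exact (hc.congr heq.symm).continuousWithinAt
    · -- t₀ < s : near t₀, F t s = 0
      have hopen : {t : ℝ | t < s} ∈ 𝓝 t₀ :=
        (isOpen_lt continuous_id continuous_const).mem_nhds hgt
      have heq : (fun t => F t s) =ᶠ[𝓝 t₀] fun _ => (0 : E) := by
        filter_upwards [hopen] with t ht
        exact indicator_of_notMem (fun hmem => absurd hmem.2 (not_le.mpr ht)) _
      exact (continuousAt_const.congr heq.symm).continuousWithinAt

lemma aux_norm_integral_le
    {y : ℝ → E} (hy : IntegrableOn y (Icc (0:ℝ) 1))
    {M : ℝ} (hM : ∀ h ∈ Icc (0:ℝ) 1, ‖S h‖ ≤ M) (hM0 : 0 ≤ M)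
    {lam' : ℝ → ℝ} (hlam' : Integrable lam' volume)
    (hbd : ∀ᵐ s ∂volume.restrict (Icc (0:ℝ) 1), ‖y s‖ ≤ lam' s)
    {t a b : ℝ} (ht : t ≤ 1) (ha : 0 ≤ a) (hab : a ≤ b) (hb : b ≤ 1) :
    ‖∫ s in a..b, S (max (t - s) 0) (y s)‖ ≤
      M * ((∫ s in (0:ℝ)..b, lam' s) - ∫ s in (0:ℝ)..a, lam' s) := by
  have hsub : (∫ s in (0:ℝ)..b, lam' s) - ∫ s in (0:ℝ)..a, lam' s = ∫ s in a..b, lam' s :=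
    intervalIntegral.integral_interval_sub_left hlam'.intervalIntegrable
      hlam'.intervalIntegrable
  rw [hsub, intervalIntegral.integral_of_le hab, intervalIntegral.integral_of_le hab,
    ← integral_const_mul]
  refine norm_integral_le_of_norm_le ((hlam'.const_mul M).integrableOn) ?_
  have hae : ∀ᵐ s ∂volume.restrict (Ioc a b), ‖y s‖ ≤ lam' s :=
    ae_restrict_of_ae_restrict_of_subset (Ioc_subset_Icc_self.trans (Icc_subset_Icc ha hb)) hbd
  filter_upwards [hae, ae_restrict_mem measurableSet_Ioc] with s h1 h2
  have hmem : max (t - s) 0 ∈ Icc (0:ℝ) 1 :=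
    ⟨le_max_right _ _, max_le (by linarith [h2.1]) zero_le_one⟩
  calc ‖S (max (t - s) 0) (y s)‖ ≤ M * ‖y s‖ :=
        ((S _).le_opNorm _).trans (by gcongr; exact hM _ hmem)
    _ ≤ M * lam' s := mul_le_mul_of_nonneg_left h1 hM0

lemma aux_part2 (hS0 : S 0 = ContinuousLinearMap.id ℝ E)
    (hSadd : ∀ s t : ℝ, 0 ≤ s → 0 ≤ t → S (t + s) = (S t).comp (S s))
    (hScont : ∀ x : E, ContinuousOn (fun t => S t x) (Set.Ici (0:ℝ)))
    (hScompact : ∀ t : ℝ, 0 < t → IsCompactOperator (S t))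
    (K₀ : (ℝ → E) → ℝ → E)
    (hK₀ : ∀ y : ℝ → E, ∀ t : ℝ, K₀ y t = ∫ s in (0:ℝ)..t, S (t - s) (y s))
    (𝔄 : Set (ℝ → E)) (h𝔄 : ∀ y ∈ 𝔄, IntegrableOn y (Set.Icc 0 1))
    (lam : ℝ → ℝ) (hlam_int : IntegrableOn lam (Set.Icc 0 1))
    (hlam : ∀ y ∈ 𝔄, ∀ᵐ t ∂(volume.restrict (Set.Icc 0 1)), ‖y t‖ ≤ lam t) :
    IsCompact (closure {g : C(Set.Icc (0:ℝ) 1, E) |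
        ∃ y ∈ 𝔄, ∀ t : Set.Icc (0:ℝ) 1, g t = K₀ y t}) := by
  obtain ⟨M, hM1, hM⟩ := aux_opNorm_bound S hScont 1
  have hM0 : (0:ℝ) < M := lt_of_lt_of_le one_pos hM1
  set lam' : ℝ → ℝ := fun t => (Icc (0:ℝ) 1).indicator (fun t => max (lam t) 0) t with hlam'def
  have hlam'int : Integrable lam' volume := by
    rw [integrable_indicator_iff measurableSet_Icc]
    exact hlam_int.pos_part
  have hlam'nonneg : ∀ s, 0 ≤ lam' s := fun s => by
    by_cases h : s ∈ Icc (0:ℝ) 1 <;> simp [hlam'def, h, le_max_right]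
  have hbd : ∀ y ∈ 𝔄, ∀ᵐ s ∂volume.restrict (Icc (0:ℝ) 1), ‖y s‖ ≤ lam' s := by
    intro y hy
    filter_upwards [hlam y hy, ae_restrict_mem measurableSet_Icc] with s h1 h2
    simp only [hlam'def, indicator_of_mem h2]
    exact h1.trans (le_max_left _ _)
  set Λ : ℝ → ℝ := fun t => ∫ s in (0:ℝ)..t, lam' s with hΛdef
  have hΛcont : Continuous Λ := hlam'int.continuous_primitive 0
  have hΛmono : ∀ a b : ℝ, a ≤ b → Λ a ≤ Λ b := by
    intro a b hab
    have h1 : Λ b - Λ a = ∫ s in a..b, lam' s :=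
      intervalIntegral.integral_interval_sub_left hlam'int.intervalIntegrable
        hlam'int.intervalIntegrable
    have h2 : 0 ≤ ∫ s in a..b, lam' s :=
      intervalIntegral.integral_nonneg hab fun u _ => hlam'nonneg u
    linarith
  have huc : ∀ ε : ℝ, 0 < ε → ∃ δ : ℝ, 0 < δ ∧ ∀ a b : ℝ, 0 ≤ a → a ≤ b → b ≤ 1 →
      b - a ≤ δ → M * (Λ b - Λ a) < ε := by
    intro ε hε
    have huc' := (isCompact_Icc (a := (0:ℝ)) (b := 1)).uniformContinuousOn_of_continuous
      hΛcont.continuousOn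
    rw [Metric.uniformContinuousOn_iff] at huc'
    obtain ⟨δ, hδ, h⟩ := huc' (ε / M) (by positivity)
    refine ⟨δ / 2, by positivity, fun a b ha hab hb hba => ?_⟩
    have hd := h b ⟨ha.trans hab, hb⟩ a ⟨ha, hab.trans hb⟩
      (by rw [Real.dist_eq, abs_of_nonneg (by linarith)]; linarith)
    rw [Real.dist_eq, abs_of_nonneg (by linarith [hΛmono a b hab])] at hd
    calc M * (Λ b - Λ a) < M * (ε / M) := mul_lt_mul_of_pos_left hd hM0
      _ = ε := by field_simp
  have hKle : ∀ y ∈ 𝔄, ∀ t : ℝ, 0 ≤ t → t ≤ 1 → ‖K₀ y t‖ ≤ M * Λ t := by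
    intro y hy t h0 h1
    rw [aux_K_eq S K₀ hK₀ y h0]
    have := aux_norm_integral_le S (h𝔄 y hy) hM (by linarith) hlam'int (hbd y hy)
      h1 le_rfl h0 h1
    simpa [hΛdef, intervalIntegral.integral_same] using this
  set R := M * Λ 1 with hR
  have hKR : ∀ y ∈ 𝔄, ∀ t : ℝ, 0 ≤ t → t ≤ 1 → K₀ y t ∈ Metric.closedBall (0:E) R := by
    intro y hy t h0 h1
    rw [Metric.mem_closedBall, dist_zero_right]
    exact (hKle y hy t h0 h1).trans (mul_le_mul_of_nonneg_left (hΛmono t 1 h1) hM0.le)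
  set V : Set E := {x | ∃ y ∈ 𝔄, ∃ t : ℝ, 0 ≤ t ∧ t ≤ 1 ∧ K₀ y t = x} with hV
  have htbV : TotallyBounded V := by
    rw [Metric.totallyBounded_iff]
    intro ε hε
    obtain ⟨δ, hδ0, hδ⟩ := huc (ε / 2) (by positivity)
    set δ' := min δ 1 with hδ'def
    have hδ'0 : 0 < δ' := lt_min hδ0 one_pos
    have hδ'1 : δ' ≤ 1 := min_le_right _ _
    have hδ'δ : δ' ≤ δ := min_le_left _ _
    have hcomp : IsCompact (closure ((S δ') '' Metric.closedBall 0 R) ∪ {(0:E)}) :=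
      ((hScompact δ' hδ'0).isCompact_closure_image_closedBall R).union isCompact_singleton
    obtain ⟨N, hNfin, hNsub⟩ := Metric.totallyBounded_iff.mp hcomp.totallyBounded
      (ε / 2) (by positivity)
    refine ⟨N, hNfin, ?_⟩
    rintro x ⟨y, hy, t, ht0, ht1, rfl⟩
    by_cases hts : t ≤ δ'
    · have hb : ‖K₀ y t‖ < ε / 2 := by
        refine lt_of_le_of_lt (hKle y hy t ht0 ht1) ?_
        have := hδ 0 t le_rfl ht0 ht1 (by linarith)
        simpa [hΛdef, intervalIntegral.integral_same] using this
      have h0mem : (0:E) ∈ closure ((S δ') '' Metric.closedBall 0 R) ∪ {(0:E)} := by simp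
      obtain ⟨w, hwN, hw⟩ := mem_iUnion₂.mp (hNsub h0mem)
      refine mem_iUnion₂.mpr ⟨w, hwN, ?_⟩
      rw [Metric.mem_ball] at hw ⊢
      calc dist (K₀ y t) w ≤ dist (K₀ y t) 0 + dist 0 w := dist_triangle _ _ _
        _ < ε / 2 + ε / 2 := by
            rw [dist_zero_right]; exact add_lt_add hb hw
        _ = ε := by ring
    · push_neg at hts
      have hid := aux_identity S hS0 hSadd hScont K₀ hK₀ hM (h𝔄 y hy)
        (t := t - δ') (t' := t) (by linarith) (by linarith) ht1
      rw [show t - (t - δ') = δ' by ring] at hid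
      have hv : K₀ y (t - δ') ∈ Metric.closedBall (0:E) R :=
        hKR y hy _ (by linarith) (by linarith)
      have hSmem : S δ' (K₀ y (t - δ')) ∈
          closure ((S δ') '' Metric.closedBall 0 R) ∪ {(0:E)} :=
        mem_union_left _ (subset_closure (mem_image_of_mem _ hv))
      obtain ⟨w, hwN, hw⟩ := mem_iUnion₂.mp (hNsub hSmem)
      rw [Metric.mem_ball] at hw
      have htail : ‖∫ s in (t - δ')..t, S (max (t - s) 0) (y s)‖ < ε / 2 :=
        (aux_norm_integral_le S (h𝔄 y hy) hM (by linarith) hlam'int (hbd y hy)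
          ht1 (by linarith) (by linarith) ht1).trans_lt
          (hδ (t - δ') t (by linarith) (by linarith) ht1 (by linarith))
      refine mem_iUnion₂.mpr ⟨w, hwN, ?_⟩
      rw [Metric.mem_ball]
      calc dist (K₀ y t) w ≤ dist (K₀ y t) (S δ' (K₀ y (t - δ'))) +
            dist (S δ' (K₀ y (t - δ'))) w := dist_triangle _ _ _
        _ < ε / 2 + ε / 2 := by
            refine add_lt_add ?_ hw
            rw [dist_eq_norm, hid]
            simpa using htail
        _ = ε := by ring
  have hVcomp : IsCompact (closure V) :=
    TotallyBounded.isCompact_of_isClosed htbV.closure isClosed_closure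
  have stepD : ∀ ε : ℝ, 0 < ε → ∃ h₀ : ℝ, 0 < h₀ ∧ h₀ ≤ 1 ∧
      ∀ h : ℝ, 0 ≤ h → h ≤ h₀ → ∀ v ∈ closure V, ‖S h v - v‖ ≤ ε := by
    intro ε hε
    have hr : (0:ℝ) < ε / (3 * (M + 1)) := by positivity
    obtain ⟨N, hNfin, hNsub⟩ := Metric.totallyBounded_iff.mp hVcomp.totallyBounded _ hr
    have hev : ∀ᶠ h in 𝓝[Ici (0:ℝ)] 0, ∀ c ∈ N, ‖S h c - c‖ < ε / 3 := by
      rw [Set.Finite.eventually_all hNfin]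
      intro c hc
      have hcw : ContinuousWithinAt (fun t => S t c) (Ici (0:ℝ)) 0 :=
        (hScont c) 0 self_mem_Ici
      have htd : Tendsto (fun t => S t c) (𝓝[Ici 0] 0) (𝓝 c) := by
        have : S 0 c = c := by rw [hS0]; rfl
        simpa [ContinuousWithinAt, this] using hcw
      filter_upwards [Metric.tendsto_nhds.mp htd (ε / 3) (by positivity)] with h hh
      rwa [dist_eq_norm] at hh
    obtain ⟨u, hu, hsub⟩ := mem_nhdsGE_iff_exists_Ico_subset.mp hev
    rw [mem_Ioi] at hu
    refine ⟨min (u / 2) 1, lt_min (by positivity) one_pos, min_le_right _ _,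
      fun h h0 hh v hv => ?_⟩
    have hhu : h < u := lt_of_le_of_lt (hh.trans (min_le_left _ _)) (by linarith)
    have hmem : ∀ c ∈ N, ‖S h c - c‖ < ε / 3 := hsub ⟨h0, hhu⟩
    obtain ⟨c, hcN, hcv⟩ := mem_iUnion₂.mp (hNsub hv)
    rw [Metric.mem_ball, dist_eq_norm] at hcv
    have hb1 : ‖S h v - S h c‖ ≤ M * ‖v - c‖ := by
      rw [← map_sub]
      refine ((S h).le_opNorm _).trans ?_
      gcongr
      exact hM h ⟨h0, hh.trans (min_le_right _ _)⟩
    have hb2 : ‖S h c - c‖ < ε / 3 := hmem c hcN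
    calc ‖S h v - v‖ ≤ ‖S h v - S h c‖ + ‖S h c - v‖ := norm_sub_le_norm_sub_add_norm_sub _ _ _
      _ ≤ ‖S h v - S h c‖ + (‖S h c - c‖ + ‖c - v‖) := by
          gcongr; exact norm_sub_le_norm_sub_add_norm_sub _ _ _
      _ ≤ M * ‖v - c‖ + (ε / 3 + ‖v - c‖) := by
          rw [← norm_neg (c - v), neg_sub]; gcongr
      _ ≤ M * (ε / (3 * (M + 1))) + (ε / 3 + ε / (3 * (M + 1))) := by gcongr
      _ ≤ ε := by
          have h1 : M * (ε / (3 * (M + 1))) + ε / (3 * (M + 1)) = ε / 3 := by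
            field_simp
          linarith
  have stepE : ∀ ε : ℝ, 0 < ε → ∃ δ : ℝ, 0 < δ ∧ ∀ y ∈ 𝔄, ∀ t t' : ℝ, 0 ≤ t → t ≤ t' →
      t' ≤ 1 → t' - t ≤ δ → ‖K₀ y t' - K₀ y t‖ ≤ ε := by
    intro ε hε
    obtain ⟨h₀, hh₀0, hh₀1, hD⟩ := stepD (ε / 2) (by positivity)
    obtain ⟨δ₂, hδ₂0, hδ₂⟩ := huc (ε / 2) (by positivity)
    refine ⟨min h₀ δ₂, lt_min hh₀0 hδ₂0, fun y hy t t' h0 htt' h1 hd => ?_⟩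
    have hid := aux_identity S hS0 hSadd hScont K₀ hK₀ hM (h𝔄 y hy) h0 htt' h1
    have hVmem : K₀ y t ∈ closure V := subset_closure ⟨y, hy, t, h0, htt'.trans h1, rfl⟩
    have e1 : ‖S (t' - t) (K₀ y t) - K₀ y t‖ ≤ ε / 2 :=
      hD (t' - t) (by linarith) (hd.trans (min_le_left _ _)) _ hVmem
    have e2 : ‖∫ s in t..t', S (max (t' - s) 0) (y s)‖ ≤ ε / 2 :=
      le_of_lt ((aux_norm_integral_le S (h𝔄 y hy) hM (by linarith) hlam'int (hbd y hy)
        h1 h0 htt' h1).trans_lt (hδ₂ t t' h0 htt' h1 (hd.trans (min_le_right _ _))))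
    calc ‖K₀ y t' - K₀ y t‖
        = ‖(S (t' - t) (K₀ y t) - K₀ y t) + ∫ s in t..t', S (max (t' - s) 0) (y s)‖ := by
          rw [hid]; congr 1; abel
      _ ≤ ‖S (t' - t) (K₀ y t) - K₀ y t‖ + ‖∫ s in t..t', S (max (t' - s) 0) (y s)‖ :=
          norm_add_le _ _
      _ ≤ ε / 2 + ε / 2 := add_le_add e1 e2
      _ = ε := by ring
  -- final assembly
  set A := {g : C(Set.Icc (0:ℝ) 1, E) | ∃ y ∈ 𝔄, ∀ t : Set.Icc (0:ℝ) 1, g t = K₀ y t} with hA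
  set e := ContinuousMap.isometryEquivBoundedOfCompact (Set.Icc (0:ℝ) 1) E with he
  have key : IsCompact (closure (e.toHomeomorph '' A)) := by
    refine BoundedContinuousFunction.arzela_ascoli (closure V) hVcomp _ ?_ ?_
    · rintro f x ⟨g, ⟨y, hy, hg⟩, rfl⟩
      have hfx : (e.toHomeomorph g) x = g x := rfl
      rw [hfx, hg x]
      exact subset_closure ⟨y, hy, ↑x, x.2.1, x.2.2, rfl⟩
    · intro x₀
      rw [Metric.equicontinuousAt_iff]
      intro ε hε
      obtain ⟨δ, hδ0, hδ⟩ := stepE (ε / 2) (by positivity)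
      refine ⟨δ, hδ0, fun x hx i => ?_⟩
      obtain ⟨f, hf⟩ := i
      obtain ⟨g, ⟨y, hy, hg⟩, rfl⟩ := hf
      have hv1 : (e.toHomeomorph g : Set.Icc (0:ℝ) 1 → E) x₀ = K₀ y ↑x₀ := hg x₀
      have hv2 : (e.toHomeomorph g : Set.Icc (0:ℝ) 1 → E) x = K₀ y ↑x := hg x
      show dist ((e.toHomeomorph g) x₀) ((e.toHomeomorph g) x) < ε
      rw [show ((e.toHomeomorph g) x₀ : E) = K₀ y ↑x₀ from hg x₀,
        show ((e.toHomeomorph g) x : E) = K₀ y ↑x from hg x]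
      rw [Subtype.dist_eq, Real.dist_eq] at hx
      rcases le_total (x₀:ℝ) (x:ℝ) with hle | hle
      · rw [dist_eq_norm, norm_sub_rev]
        have habs : (x:ℝ) - (x₀:ℝ) ≤ δ := by
          rw [abs_of_nonneg (sub_nonneg.mpr hle)] at hx; linarith
        have := hδ y hy ↑x₀ ↑x x₀.2.1 hle x.2.2 habs
        linarith
      · rw [dist_eq_norm]
        have habs : (x₀:ℝ) - (x:ℝ) ≤ δ := by
          rw [abs_sub_comm, abs_of_nonneg (sub_nonneg.mpr hle)] at hx; linarith
        have := hδ y hy ↑x ↑x₀ x.2.1 hle x₀.2.2 habs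
        linarith
  have hpre : e.toHomeomorph ⁻¹' (e.toHomeomorph '' A) = A :=
    (e.toHomeomorph).injective.preimage_image A
  have hcl : closure A = e.toHomeomorph ⁻¹' closure (e.toHomeomorph '' A) := by
    rw [e.toHomeomorph.preimage_closure, hpre]
  rw [hA] at hcl
  rw [hcl]
  exact e.toHomeomorph.isCompact_preimage.mpr key

end Aux

/-- Let `(S(t))_{t≥0}` be a compact `C₀`-semigroup on a real Banach space `E`
and, for a Bochner integrable `y : [0,1] → E`, let `K₀(y)(t) = ∫₀ᵗ S(t-s) y(s) ds`.  Then each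
`K₀ y` is continuous on `[0,1]`, and `K₀` maps every integrably bounded family `𝔄` of Bochner
integrable functions onto a relatively compact subset of `C([0,1], E)` (sup metric). -/
theorem cauchy_operator_maps_integrably_bounded_to_relatively_compact
    {E : Type*} [NormedAddCommGroup E] [NormedSpace ℝ E] [CompleteSpace E]
    (S : ℝ → E →L[ℝ] E)
    (hS0 : S 0 = ContinuousLinearMap.id ℝ E)
    (hSadd : ∀ s t : ℝ, 0 ≤ s → 0 ≤ t → S (t + s) = (S t).comp (S s))
    (hScont : ∀ x : E, ContinuousOn (fun t => S t x) (Set.Ici (0:ℝ)))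
    (hScompact : ∀ t : ℝ, 0 < t → IsCompactOperator (S t))
    (K₀ : (ℝ → E) → ℝ → E)
    (hK₀ : ∀ y : ℝ → E, ∀ t : ℝ, K₀ y t = ∫ s in (0:ℝ)..t, S (t - s) (y s)) :
    (∀ y : ℝ → E, IntegrableOn y (Set.Icc 0 1) → ContinuousOn (K₀ y) (Set.Icc 0 1)) ∧
    (∀ 𝔄 : Set (ℝ → E), (∀ y ∈ 𝔄, IntegrableOn y (Set.Icc 0 1)) →
      (∃ lam : ℝ → ℝ, IntegrableOn lam (Set.Icc 0 1) ∧
        ∀ y ∈ 𝔄, ∀ᵐ t ∂(volume.restrict (Set.Icc 0 1)), ‖y t‖ ≤ lam t) →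
      IsCompact (closure {g : C(Set.Icc (0:ℝ) 1, E) |
        ∃ y ∈ 𝔄, ∀ t : Set.Icc (0:ℝ) 1, g t = K₀ y t})) := by
  constructor
  · intro y hy
    obtain ⟨M, hM1, hM⟩ := aux_opNorm_bound S hScont 1
    exact aux_continuousOn S hScont K₀ hK₀ hM hy
  · rintro 𝔄 h𝔄 ⟨lam, hlam_int, hlam⟩
    exact aux_part2 S hS0 hSadd hScont hScompact K₀ hK₀ 𝔄 h𝔄 lam hlam_int hlam
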